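/- For every real number p, the matrix identity ρ(p) = (1/2 + p/√2) · P₀ + ((1 − √2)/2 + p/√2) · P₁ + (1/√2 − √2·p) · P₊ holds in Matrix (Fin 2) (Fin 2) ℝ. Moreover, all three coefficients are nonnegative if and only if (1 − tan(π/8))/2 ≤ p ≤ 1/2, so on this interval ρ(p) is a convex combination of the stabilizer projectors P₀, P₁, P₊. -/
import Mathlib


open Real

/-- The stabilizer projector `P₀ = |0⟩⟨0|`. -/
noncomputable def P0 : Matrix (Fin 2) (Fin 2) ℝ := !![1, 0; 0, 0]

/-- The stabilizer projector `P₁ = |1⟩⟨1|`. -/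
noncomputable def P1 : Matrix (Fin 2) (Fin 2) ℝ := !![0, 0; 0, 1]

/-- The stabilizer projector `P₊ = |+⟩⟨+|`. -/
noncomputable def Pplus : Matrix (Fin 2) (Fin 2) ℝ := !![1/2, 1/2; 1/2, 1/2]

/-- The magic state `|H⟩` after dephasing noise of rate `p`. -/
noncomputable def ρdeph (p : ℝ) : Matrix (Fin 2) (Fin 2) ℝ :=
  !![cos (π/8) ^ 2, (1 - 2*p) * cos (π/8) * sin (π/8);
     (1 - 2*p) * cos (π/8) * sin (π/8), sin (π/8) ^ 2]

theorem stmt_9 (p : ℝ) :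
    ρdeph p = (1/2 + p / Real.sqrt 2) • P0 + ((1 - Real.sqrt 2) / 2 + p / Real.sqrt 2) • P1
        + (1 / Real.sqrt 2 - Real.sqrt 2 * p) • Pplus
    ∧ ((0 ≤ 1/2 + p / Real.sqrt 2 ∧ 0 ≤ (1 - Real.sqrt 2) / 2 + p / Real.sqrt 2
          ∧ 0 ≤ 1 / Real.sqrt 2 - Real.sqrt 2 * p)
        ↔ ((1 - tan (π/8)) / 2 ≤ p ∧ p ≤ 1/2)) := by
  have h2 : Real.sqrt 2 ^ 2 = 2 := Real.sq_sqrt (by norm_num)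
  have h2pos : (0:ℝ) < Real.sqrt 2 := Real.sqrt_pos.mpr (by norm_num)
  have hc2 : cos (π/8)^2 = 1/2 + Real.sqrt 2/4 := by
    rw [Real.cos_sq, show 2*(π/8) = π/4 by ring, Real.cos_pi_div_four]; ring
  have hsc : cos (π/8) * sin (π/8) = Real.sqrt 2/4 := by
    have := Real.sin_two_mul (π/8)
    rw [show 2*(π/8) = π/4 by ring, Real.sin_pi_div_four] at this
    linarith
  have hs2 : sin (π/8)^2 = 1/2 - Real.sqrt 2/4 := by
    have := Real.sin_sq_add_cos_sq (π/8); linarith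
  have hcpos : 0 < cos (π/8) := by
    apply Real.cos_pos_of_mem_Ioo
    constructor <;> nlinarith [Real.pi_pos]
  have htan : tan (π/8) = Real.sqrt 2 - 1 := by
    rw [Real.tan_eq_sin_div_cos, div_eq_iff (ne_of_gt hcpos)]
    apply mul_right_cancel₀ (ne_of_gt hcpos)
    linear_combination hsc + (1 - Real.sqrt 2) * hc2 - h2/4
  have key : ∀ x : ℝ, x / Real.sqrt 2 = Real.sqrt 2 * x / 2 := by
    intro x
    rw [div_eq_div_iff (ne_of_gt h2pos) (by norm_num : (2:ℝ) ≠ 0)]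
    linear_combination -x * h2
  constructor
  · ext i j
    fin_cases i <;> fin_cases j <;>
      simp [ρdeph, P0, P1, Pplus, -Real.cos_pi_div_eight, -Real.sin_pi_div_eight,
        mul_assoc, hc2, hsc, hs2] <;>
      simp only [inv_eq_one_div, key] <;> ring
  · rw [htan]
    simp only [key]
    constructor
    · rintro ⟨h1, hb, hc⟩
      constructor
      · nlinarith
      · nlinarith
    · rintro ⟨ha, hb⟩
      refine ⟨by nlinarith, by nlinarith, by nlinarith⟩
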